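/- Slicing criterion for normality: let P ⊂ ℝ³ be a lattice polytope contained in the slab 0 ≤ z ≤ N, and for each integer i with 0 ≤ i ≤ N let Gᵢ = P ∩ {z = i}. Suppose each Gᵢ is a lattice polytope (all vertices in ℤ³) and each slab piece P(Gᵢ) = Conv{Gᵢ, Gᵢ₊₁} is normal and satisfies P ∩ {i ≤ z ≤ i+1} = P(Gᵢ). Then P is normal. -/

import Mathlib

open scoped Pointwise

def IsLatticePt {d : ℕ} (x : Fin d → ℝ) : Prop := ∀ i, ∃ z : ℤ, x i = (z : ℝ)

def IsLatticePolytope {d : ℕ} (P : Set (Fin d → ℝ)) : Prop :=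
  ∃ V : Finset (Fin d → ℝ), V.Nonempty ∧ (∀ v ∈ V, IsLatticePt v) ∧ P = convexHull ℝ ↑V

def IsNormalPolytope {d : ℕ} (P : Set (Fin d → ℝ)) : Prop :=
  ∀ n : ℕ, 1 ≤ n → ∀ x ∈ (n : ℝ) • P, IsLatticePt x →
    ∃ f : Fin n → (Fin d → ℝ), (∀ i, f i ∈ P ∧ IsLatticePt (f i)) ∧ x = ∑ i, f i

def P1 : Set (Fin 3 → ℝ) := convexHull ℝ {![0,0,0], ![1,0,0], ![0,1,0], ![0,0,1]}

def dot2 (x y : Fin 2 → ℝ) : ℝ := ∑ i, x i * y i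

def normalCone (P : Set (Fin 2 → ℝ)) (u : Fin 2 → ℝ) : Set (Fin 2 → ℝ) :=
  {y | ∀ x ∈ P, dot2 x y ≤ dot2 u y}

/-- The normal fan of `A` refines the normal fan of `B`: every normal cone of `A`
is contained in some normal cone of `B`. -/
def FanRefines (A B : Set (Fin 2 → ℝ)) : Prop :=
  ∀ u ∈ A, ∃ v ∈ B, normalCone A u ⊆ normalCone B v

/-- At every vertex the primitive edge directions form a ℤ-basis of ℤ². -/
def IsSmoothPolygon (F : Set (Fin 2 → ℝ)) : Prop :=
  ∀ u ∈ Set.extremePoints ℝ F, ∃ m₁ m₂ : Fin 2 → ℤ,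
    (m₁ 0 * m₂ 1 - m₁ 1 * m₂ 0 = 1 ∨ m₁ 0 * m₂ 1 - m₁ 1 * m₂ 0 = -1) ∧
    {y : Fin 2 → ℝ | ∃ t : ℝ, ∃ x ∈ F, 0 ≤ t ∧ y = t • (x - u)} =
      {y : Fin 2 → ℝ | ∃ a b : ℝ, 0 ≤ a ∧ 0 ≤ b ∧
        y = a • (fun i => (m₁ i : ℝ)) + b • (fun i => (m₂ i : ℝ))}

def emb (v : Fin 2 → ℝ) (t : ℝ) : Fin 3 → ℝ := ![v 0, v 1, t]

def cayley (F G : Set (Fin 2 → ℝ)) : Set (Fin 3 → ℝ) :=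
  convexHull ℝ ((fun v => emb v 0) '' F ∪ (fun v => emb v 1) '' G)


/-- combination of three points -/
noncomputable def cmb (a b c : Fin 3 → ℝ) (s t u : ℝ) : Fin 3 → ℝ :=
  fun j => s * a j + t * b j + u * c j

def InT (a b c x : Fin 3 → ℝ) : Prop :=
  ∃ s t u : ℝ, 0 ≤ s ∧ 0 ≤ t ∧ 0 ≤ u ∧ s + t + u = 1 ∧ x = cmb a b c s t u

def dt (a b c : Fin 3 → ℝ) : ℝ :=
  (b 0 - a 0) * (c 1 - a 1) - (b 1 - a 1) * (c 0 - a 0)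

lemma lat_sub {x y : Fin 3 → ℝ} (hx : IsLatticePt x) (hy : IsLatticePt y) :
    IsLatticePt (x - y) := by
  intro i; obtain ⟨z1, h1⟩ := hx i; obtain ⟨z2, h2⟩ := hy i
  exact ⟨z1 - z2, by simp [h1, h2]⟩

lemma lat_add {x y : Fin 3 → ℝ} (hx : IsLatticePt x) (hy : IsLatticePt y) :
    IsLatticePt (x + y) := by
  intro i; obtain ⟨z1, h1⟩ := hx i; obtain ⟨z2, h2⟩ := hy i
  exact ⟨z1 + z2, by simp [h1, h2]⟩

lemma dt_int {a b c : Fin 3 → ℝ} (ha : IsLatticePt a) (hb : IsLatticePt b)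
    (hc : IsLatticePt c) : ∃ z : ℤ, dt a b c = (z : ℝ) := by
  obtain ⟨a0, ha0⟩ := ha 0; obtain ⟨a1, ha1⟩ := ha 1
  obtain ⟨b0, hb0⟩ := hb 0; obtain ⟨b1, hb1⟩ := hb 1
  obtain ⟨c0, hc0⟩ := hc 0; obtain ⟨c1, hc1⟩ := hc 1
  exact ⟨(b0 - a0) * (c1 - a1) - (b1 - a1) * (c0 - a0), by
    simp [dt, ha0, ha1, hb0, hb1, hc0, hc1]⟩

/-- InT is preserved under taking combinations: special 3-point version. -/
lemma InT_comb3 {a b c p q r y : Fin 3 → ℝ} (hp : InT a b c p) (hq : InT a b c q)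
    (hr : InT a b c r) (hy : InT p q r y) : InT a b c y := by
  obtain ⟨s1, t1, u1, hs1, ht1, hu1, hsum1, hp⟩ := hp
  obtain ⟨s2, t2, u2, hs2, ht2, hu2, hsum2, hq⟩ := hq
  obtain ⟨s3, t3, u3, hs3, ht3, hu3, hsum3, hr⟩ := hr
  obtain ⟨s, t, u, hs, ht, hu, hsum, hy⟩ := hy
  refine ⟨s * s1 + t * s2 + u * s3, s * t1 + t * t2 + u * t3, s * u1 + t * u2 + u * u3,
    by positivity, by positivity, by positivity, by nlinarith, ?_⟩
  subst hy hp hq hr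
  funext j
  simp only [cmb]
  ring

lemma InT_a (a b c : Fin 3 → ℝ) : InT a b c a :=
  ⟨1, 0, 0, by norm_num, by norm_num, by norm_num, by norm_num, by funext j; simp [cmb]⟩

lemma InT_b (a b c : Fin 3 → ℝ) : InT a b c b :=
  ⟨0, 1, 0, by norm_num, by norm_num, by norm_num, by norm_num, by funext j; simp [cmb]⟩

lemma InT_c (a b c : Fin 3 → ℝ) : InT a b c c :=
  ⟨0, 0, 1, by norm_num, by norm_num, by norm_num, by norm_num, by funext j; simp [cmb]⟩

/-- two-point step: a lattice point which is a nonneg combination with weight 2 of two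
lattice points of the triangle splits into two lattice points of the triangle. -/
lemma seg2 {a b c p q x : Fin 3 → ℝ} (hp : InT a b c p) (hq : InT a b c q)
    (hpl : IsLatticePt p) (hql : IsLatticePt q) (hxl : IsLatticePt x)
    {α β : ℝ} (hα : 0 ≤ α) (hβ : 0 ≤ β) (hsum : α + β = 2)
    (hx : ∀ j, x j = α * p j + β * q j) :
    ∃ f : Fin 2 → (Fin 3 → ℝ), (∀ i, InT a b c (f i) ∧ IsLatticePt (f i)) ∧ x = ∑ i, f i := by
  by_cases h1 : 1 ≤ α
  · refine ⟨![p, x - p], ?_, ?_⟩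
    · intro i
      fin_cases i
      · exact ⟨hp, hpl⟩
      · refine ⟨InT_comb3 hp hq hq ⟨α - 1, β, 0, by linarith, hβ, le_refl _, by linarith, ?_⟩,
          lat_sub hxl hpl⟩
        funext j; simp [cmb, hx j]; ring
    · funext j
      simp [Fin.sum_univ_two]
  · have h1' : 1 ≤ β := by linarith
    refine ⟨![q, x - q], ?_, ?_⟩
    · intro i
      fin_cases i
      · exact ⟨hq, hql⟩
      · refine ⟨InT_comb3 hp hq hq ⟨α, β - 1, 0, hα, by linarith, le_refl _, by linarith, ?_⟩,
          lat_sub hxl hql⟩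
        funext j; simp [cmb, hx j]; ring
    · funext j
      simp [Fin.sum_univ_two]

lemma dt_sub1 (a b c : Fin 3 → ℝ) {l m nn : ℝ} (h : l + m + nn = 1) :
    dt (cmb a b c l m nn) b c = l * dt a b c := by
  have hnn : nn = 1 - l - m := by linarith
  subst hnn; simp only [dt, cmb]; ring

lemma dt_sub2 (a b c : Fin 3 → ℝ) {l m nn : ℝ} (h : l + m + nn = 1) :
    dt a (cmb a b c l m nn) c = m * dt a b c := by
  have hnn : nn = 1 - l - m := by linarith
  subst hnn; simp only [dt, cmb]; ring

lemma dt_sub3 (a b c : Fin 3 → ℝ) {l m nn : ℝ} (h : l + m + nn = 1) :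
    dt a b (cmb a b c l m nn) = nn * dt a b c := by
  have hnn : nn = 1 - l - m := by linarith
  subst hnn; simp only [dt, cmb]; ring

/-- collinearity: if the determinant vanishes and `a, b` differ, then `c` is an affine
combination of `a` and `b`. -/
lemma collin {a b c : Fin 3 → ℝ} (ha2 : a 2 = 0) (hb2 : b 2 = 0) (hc2 : c 2 = 0)
    (hz : dt a b c = 0) (hne : b 0 ≠ a 0 ∨ b 1 ≠ a 1) :
    ∃ t : ℝ, ∀ j, c j = (1 - t) * a j + t * b j := by
  rcases hne with hne | hne
  · refine ⟨(c 0 - a 0) / (b 0 - a 0), fun j => ?_⟩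
    have hd : b 0 - a 0 ≠ 0 := sub_ne_zero.mpr hne
    fin_cases j
    · simp only [Fin.zero_eta, Fin.mk_one]
      field_simp
      ring
    · simp only [dt] at hz
      simp only [Fin.zero_eta, Fin.mk_one]
      field_simp
      nlinarith [hz]
    · simp [ha2, hb2, hc2]
  · refine ⟨(c 1 - a 1) / (b 1 - a 1), fun j => ?_⟩
    have hd : b 1 - a 1 ≠ 0 := sub_ne_zero.mpr hne
    fin_cases j
    · simp only [dt] at hz
      simp only [Fin.zero_eta, Fin.mk_one]
      field_simp
      nlinarith [hz]
    · simp only [Fin.zero_eta, Fin.mk_one]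
      field_simp
      ring
    · simp [ha2, hb2, hc2]

lemma natAbs_lt_of_scale {z z' : ℤ} {l : ℝ} (hz0 : z ≠ 0) (hlp : 0 < l) (hl1 : l < 1)
    (he : (z' : ℝ) = l * (z : ℝ)) : z'.natAbs < z.natAbs := by
  have h1 : |(z' : ℝ)| < |(z : ℝ)| := by
    rw [he, abs_mul, abs_of_pos hlp]
    have h0 : (0:ℝ) < |(z : ℝ)| := abs_pos.mpr (Int.cast_ne_zero.mpr hz0)
    nlinarith
  have h2 : ((z'.natAbs : ℝ)) < ((z.natAbs : ℝ)) := by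
    rw [Nat.cast_natAbs, Nat.cast_natAbs]; exact_mod_cast h1
  exact_mod_cast h2

set_option maxHeartbeats 1000000 in
/-- Normality of lattice triangles in the plane `z = 0`. -/
lemma tri : ∀ D : ℕ, ∀ a b c : Fin 3 → ℝ,
    IsLatticePt a → IsLatticePt b → IsLatticePt c →
    a 2 = 0 → b 2 = 0 → c 2 = 0 →
    (∃ z : ℤ, dt a b c = (z : ℝ) ∧ z.natAbs = D) →
    ∀ n : ℕ, 1 ≤ n → ∀ α β γ : ℝ, 0 ≤ α → 0 ≤ β → 0 ≤ γ → α + β + γ = (n : ℝ) →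
    IsLatticePt (cmb a b c α β γ) →
    ∃ f : Fin n → (Fin 3 → ℝ), (∀ i, InT a b c (f i) ∧ IsLatticePt (f i)) ∧
      cmb a b c α β γ = ∑ i, f i := by
  intro D
  induction D using Nat.strong_induction_on with
  | _ D IH =>
  intro a b c ha hb hc ha2 hb2 hc2 hD n hn
  induction n, hn using Nat.le_induction with
  | base =>
    intro α β γ hα hβ hγ hsum hlat
    refine ⟨fun _ => cmb a b c α β γ, fun i => ⟨⟨α, β, γ, hα, hβ, hγ, by exact_mod_cast hsum, rfl⟩, hlat⟩, ?_⟩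
    simp
  | succ n hn IHn =>
    intro α β γ hα hβ hγ hsum hlat
    push_cast at hsum
    by_cases hα1 : 1 ≤ α
    · have hlat' : IsLatticePt (cmb a b c (α - 1) β γ) := by
        have he : cmb a b c (α - 1) β γ = cmb a b c α β γ - a := by
          funext j; simp [cmb]; ring
        rw [he]; exact lat_sub hlat ha
      obtain ⟨f', hf', hs'⟩ := IHn (α - 1) β γ (by linarith) hβ hγ (by push_cast; linarith) hlat'
      refine ⟨Fin.cons a f', ?_, ?_⟩
      · intro i
        refine Fin.cases ?_ (fun j => ?_) i
        · exact ⟨InT_a a b c, ha⟩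
        · simpa using hf' j
      · rw [Fin.sum_cons, ← hs']
        funext j; simp [cmb]; ring
    · by_cases hβ1 : 1 ≤ β
      · have hlat' : IsLatticePt (cmb a b c α (β - 1) γ) := by
          have he : cmb a b c α (β - 1) γ = cmb a b c α β γ - b := by
            funext j; simp [cmb]; ring
          rw [he]; exact lat_sub hlat hb
        obtain ⟨f', hf', hs'⟩ := IHn α (β - 1) γ hα (by linarith) hγ (by push_cast; linarith) hlat'
        refine ⟨Fin.cons b f', ?_, ?_⟩
        · intro i
          refine Fin.cases ?_ (fun j => ?_) i
          · exact ⟨InT_b a b c, hb⟩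
          · simpa using hf' j
        · rw [Fin.sum_cons, ← hs']
          funext j; simp [cmb]; ring
      · by_cases hγ1 : 1 ≤ γ
        · have hlat' : IsLatticePt (cmb a b c α β (γ - 1)) := by
            have he : cmb a b c α β (γ - 1) = cmb a b c α β γ - c := by
              funext j; simp [cmb]; ring
            rw [he]; exact lat_sub hlat hc
          obtain ⟨f', hf', hs'⟩ := IHn α β (γ - 1) hα hβ (by linarith) (by push_cast; linarith) hlat'
          refine ⟨Fin.cons c f', ?_, ?_⟩
          · intro i
            refine Fin.cases ?_ (fun j => ?_) i
            · exact ⟨InT_c a b c, hc⟩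
            · simpa using hf' j
          · rw [Fin.sum_cons, ← hs']
            funext j; simp [cmb]; ring
        · -- all coefficients < 1, so n + 1 = 2
          push_neg at hα1 hβ1 hγ1
          have hn1 : n = 1 := by
            by_contra h
            have h2 : 2 ≤ n := by omega
            have : (2 : ℝ) ≤ (n : ℝ) := by exact_mod_cast h2
            linarith
          subst hn1
          norm_num at hsum
          have hsum2 : α + β + γ = 2 := hsum
          have hαp : 0 < α := by linarith
          have hβp : 0 < β := by linarith
          have hγp : 0 < γ := by linarith
          obtain ⟨z, hz, hzD⟩ := hD
          by_cases hz0 : z = 0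
          · -- collinear case
            have hdt0 : dt a b c = 0 := by rw [hz, hz0]; norm_num
            by_cases hba : b = a
            · -- two-point (a, c)
              subst hba
              exact seg2 (InT_a b b c) (InT_c b b c) hb hc hlat (by linarith : (0:ℝ) ≤ α + β)
                hγ (by linarith) (fun j => by simp [cmb]; ring)
            · have hne : b 0 ≠ a 0 ∨ b 1 ≠ a 1 := by
                by_contra h
                push_neg at h
                exact hba (by funext j; fin_cases j <;> simp [h.1, h.2, ha2, hb2])
              obtain ⟨t, hct⟩ := collin ha2 hb2 hc2 hdt0 hne
              rcases le_or_gt t 0 with ht | ht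
              · -- a between b, c : a = u b + (1-u) c with u = -t/(1-t)
                have h1t : (0:ℝ) < 1 - t := by linarith
                set u : ℝ := -t / (1 - t) with hu
                have hu0 : 0 ≤ u := div_nonneg (by linarith) (by linarith)
                have hu1 : u < 1 := by
                  rw [hu, div_lt_one h1t]; linarith
                have hau : ∀ j, a j = u * b j + (1 - u) * c j := by
                  intro j
                  rw [hct j, hu]
                  field_simp
                  ring
                refine seg2 (InT_b a b c) (InT_c a b c) hb hc hlat
                  (by positivity : (0:ℝ) ≤ α * u + β) (by nlinarith : (0:ℝ) ≤ α * (1 - u) + γ)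
                  (by ring_nf; nlinarith [hsum2]) (fun j => ?_)
                rw [show cmb a b c α β γ j = α * a j + β * b j + γ * c j from rfl, hau j]
                ring
              · rcases le_or_gt t 1 with ht1 | ht1
                · -- c between a, b
                  refine seg2 (InT_a a b c) (InT_b a b c) ha hb hlat
                    (by nlinarith : (0:ℝ) ≤ α + γ * (1 - t)) (by positivity : (0:ℝ) ≤ β + γ * t)
                    (by nlinarith [hsum2]) (fun j => ?_)
                  rw [show cmb a b c α β γ j = α * a j + β * b j + γ * c j from rfl, hct j]
                  ring
                · -- b between a, c : b = (1 - 1/t) a + (1/t) c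
                  have ht0 : (0:ℝ) < t := by linarith
                  have htne : t ≠ 0 := ne_of_gt ht0
                  have hbt : ∀ j, b j = (1 - 1/t) * a j + (1/t) * c j := by
                    intro j
                    rw [hct j]
                    field_simp
                    ring
                  have h1t : 0 ≤ 1 - 1/t := by
                    have : 1/t < 1 := by rw [div_lt_one ht0]; linarith
                    linarith [this]
                  refine seg2 (InT_a a b c) (InT_c a b c) ha hc hlat
                    (by nlinarith : (0:ℝ) ≤ α + β * (1 - 1/t))
                    (by positivity : (0:ℝ) ≤ β * (1/t) + γ)
                    (by nlinarith [hsum2]) (fun j => ?_)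
                  rw [show cmb a b c α β γ j = α * a j + β * b j + γ * c j from rfl, hbt j]
                  ring
          · -- noncollinear: interior lattice point
            have hDpos : 0 < D := by
              rw [← hzD]; exact Int.natAbs_pos.mpr hz0
            set l : ℝ := 1 - α with hl
            set m : ℝ := 1 - β with hm
            set nn : ℝ := 1 - γ with hnn
            have hlp : 0 < l := by rw [hl]; linarith
            have hmp : 0 < m := by rw [hm]; linarith
            have hnnp : 0 < nn := by rw [hnn]; linarith
            have hl1 : l < 1 := by rw [hl]; linarith
            have hm1 : m < 1 := by rw [hm]; linarith
            have hnn1 : nn < 1 := by rw [hnn]; linarith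
            have hsum1 : l + m + nn = 1 := by rw [hl, hm, hnn]; linarith
            set p : Fin 3 → ℝ := cmb a b c l m nn with hp
            have hpl : IsLatticePt p := by
              have he : p = a + b + c - cmb a b c α β γ := by
                funext j; simp [hp, cmb, hl, hm, hnn]; ring
              rw [he]
              exact lat_sub (lat_add (lat_add ha hb) hc) hlat
            have hp2 : p 2 = 0 := by simp [hp, cmb, ha2, hb2, hc2]
            have hInp : InT a b c p := ⟨l, m, nn, le_of_lt hlp, le_of_lt hmp, le_of_lt hnnp, hsum1, rfl⟩
            -- helper to finish given a subtriangle decomposition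
            have finish : ∀ (x1 x2 x3 : Fin 3 → ℝ), InT a b c x1 → InT a b c x2 → InT a b c x3 →
                IsLatticePt x1 → IsLatticePt x2 → IsLatticePt x3 →
                x1 2 = 0 → x2 2 = 0 → x3 2 = 0 →
                (∃ z' : ℤ, dt x1 x2 x3 = (z' : ℝ) ∧ z'.natAbs < D) →
                ∀ α' β' γ' : ℝ, 0 ≤ α' → 0 ≤ β' → 0 ≤ γ' → α' + β' + γ' = 2 →
                cmb a b c α β γ = cmb x1 x2 x3 α' β' γ' →
                ∃ f : Fin 2 → (Fin 3 → ℝ), (∀ i, InT a b c (f i) ∧ IsLatticePt (f i)) ∧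
                  cmb a b c α β γ = ∑ i, f i := by
              intro x1 x2 x3 h1 h2 h3 hl1' hl2 hl3 h12 h22 h32 ⟨z', hz', hzlt⟩ α' β' γ' hα' hβ' hγ' hs' hx
              obtain ⟨f, hf, hfs⟩ := IH z'.natAbs hzlt x1 x2 x3 hl1' hl2 hl3 h12 h22 h32
                ⟨z', hz', rfl⟩ 2 (by norm_num) α' β' γ' hα' hβ' hγ' (by push_cast; linarith)
                (by rw [← hx]; exact hlat)
              exact ⟨f, fun i => ⟨InT_comb3 h1 h2 h3 (hf i).1, (hf i).2⟩, by rw [hx, hfs]⟩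
            rcases le_total (α / l) (β / m) with hab | hab
            · rcases le_total (α / l) (γ / nn) with hac | hac
              · -- min is α / l : subtriangle (p, b, c)
                have hdt : dt p b c = l * dt a b c := dt_sub1 a b c hsum1
                obtain ⟨z', hz'⟩ := dt_int hpl hb hc
                have hzlt : z'.natAbs < D := by
                  rw [← hzD]
                  exact natAbs_lt_of_scale hz0 hlp hl1 (by rw [← hz', hdt, hz])
                have hlne : l ≠ 0 := ne_of_gt hlp
                refine finish p b c hInp (InT_b a b c) (InT_c a b c) hpl hb hc hp2 hb2 hc2
                  ⟨z', hz', hzlt⟩ (α / l) (β - (α / l) * m) (γ - (α / l) * nn)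
                  (by positivity) ?_ ?_ ?_ ?_
                · rw [sub_nonneg, div_mul_eq_mul_div, div_le_iff₀ hlp]
                  rw [div_le_div_iff₀ hlp hmp] at hab
                  linarith
                · rw [sub_nonneg, div_mul_eq_mul_div, div_le_iff₀ hlp]
                  rw [div_le_div_iff₀ hlp hnnp] at hac
                  linarith
                · have hkey : α / l * l = α := div_mul_cancel₀ α hlne
                  have h3 : α / l * (m) + α / l * (nn) = α / l - α := by
                    have hmn : m + nn = 1 - l := by linarith
                    calc α / l * (m) + α / l * (nn) = α / l * (m + nn) := by ring
                    _ = α / l * 1 - α / l * l := by rw [hmn]; ring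
                    _ = α / l - α := by rw [hkey]; ring
                  linarith
                · have hkey : α / l * l = α := div_mul_cancel₀ α hlne
                  funext j
                  simp only [cmb, hp]
                  linear_combination (-(a j)) * hkey
              · -- min is γ / nn : subtriangle (a, b, p)
                have hdt : dt a b p = nn * dt a b c := dt_sub3 a b c hsum1
                obtain ⟨z', hz'⟩ := dt_int ha hb hpl
                have hzlt : z'.natAbs < D := by
                  rw [← hzD]
                  exact natAbs_lt_of_scale hz0 hnnp hnn1 (by rw [← hz', hdt, hz])
                have hnne : nn ≠ 0 := ne_of_gt hnnp
                refine finish a b p (InT_a a b c) (InT_b a b c) hInp ha hb hpl ha2 hb2 hp2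
                  ⟨z', hz', hzlt⟩ (α - (γ / nn) * l) (β - (γ / nn) * m) (γ / nn)
                  ?_ ?_ (by positivity) ?_ ?_
                · rw [sub_nonneg, div_mul_eq_mul_div, div_le_iff₀ hnnp]
                  rw [div_le_div_iff₀ hnnp hlp] at hac
                  linarith
                · rw [sub_nonneg, div_mul_eq_mul_div, div_le_iff₀ hnnp]
                  have hbc : γ / nn ≤ β / m := le_trans hac hab
                  rw [div_le_div_iff₀ hnnp hmp] at hbc
                  linarith
                · have hkey : γ / nn * nn = γ := div_mul_cancel₀ γ hnne
                  have h3 : γ / nn * (l) + γ / nn * (m) = γ / nn - γ := by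
                    have hmn : l + m = 1 - nn := by linarith
                    calc γ / nn * (l) + γ / nn * (m) = γ / nn * (l + m) := by ring
                    _ = γ / nn * 1 - γ / nn * nn := by rw [hmn]; ring
                    _ = γ / nn - γ := by rw [hkey]; ring
                  linarith
                · have hkey : γ / nn * nn = γ := div_mul_cancel₀ γ hnne
                  funext j
                  simp only [cmb, hp]
                  linear_combination (-(c j)) * hkey
            · rcases le_total (β / m) (γ / nn) with hbc | hbc
              · -- min is β / m : subtriangle (a, p, c)
                have hdt : dt a p c = m * dt a b c := dt_sub2 a b c hsum1
                obtain ⟨z', hz'⟩ := dt_int ha hpl hc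
                have hzlt : z'.natAbs < D := by
                  rw [← hzD]
                  exact natAbs_lt_of_scale hz0 hmp hm1 (by rw [← hz', hdt, hz])
                have hmne : m ≠ 0 := ne_of_gt hmp
                refine finish a p c (InT_a a b c) hInp (InT_c a b c) ha hpl hc ha2 hp2 hc2
                  ⟨z', hz', hzlt⟩ (α - (β / m) * l) (β / m) (γ - (β / m) * nn)
                  ?_ (by positivity) ?_ ?_ ?_
                · rw [sub_nonneg, div_mul_eq_mul_div, div_le_iff₀ hmp]
                  rw [div_le_div_iff₀ hmp hlp] at hab
                  linarith
                · rw [sub_nonneg, div_mul_eq_mul_div, div_le_iff₀ hmp]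
                  rw [div_le_div_iff₀ hmp hnnp] at hbc
                  linarith
                · have hkey : β / m * m = β := div_mul_cancel₀ β hmne
                  have h3 : β / m * (l) + β / m * (nn) = β / m - β := by
                    have hmn : l + nn = 1 - m := by linarith
                    calc β / m * (l) + β / m * (nn) = β / m * (l + nn) := by ring
                    _ = β / m * 1 - β / m * m := by rw [hmn]; ring
                    _ = β / m - β := by rw [hkey]; ring
                  linarith
                · have hkey : β / m * m = β := div_mul_cancel₀ β hmne
                  funext j
                  simp only [cmb, hp]
                  linear_combination (-(b j)) * hkey
              · -- min is γ / nn : subtriangle (a, b, p)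
                have hdt : dt a b p = nn * dt a b c := dt_sub3 a b c hsum1
                obtain ⟨z', hz'⟩ := dt_int ha hb hpl
                have hzlt : z'.natAbs < D := by
                  rw [← hzD]
                  exact natAbs_lt_of_scale hz0 hnnp hnn1 (by rw [← hz', hdt, hz])
                have hnne : nn ≠ 0 := ne_of_gt hnnp
                refine finish a b p (InT_a a b c) (InT_b a b c) hInp ha hb hpl ha2 hb2 hp2
                  ⟨z', hz', hzlt⟩ (α - (γ / nn) * l) (β - (γ / nn) * m) (γ / nn)
                  ?_ ?_ (by positivity) ?_ ?_
                · have hac : γ / nn ≤ α / l := le_trans hbc hab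
                  rw [sub_nonneg, div_mul_eq_mul_div, div_le_iff₀ hnnp]
                  rw [div_le_div_iff₀ hnnp hlp] at hac
                  linarith
                · rw [sub_nonneg, div_mul_eq_mul_div, div_le_iff₀ hnnp]
                  rw [div_le_div_iff₀ hnnp hmp] at hbc
                  linarith
                · have hkey : γ / nn * nn = γ := div_mul_cancel₀ γ hnne
                  have h3 : γ / nn * (l) + γ / nn * (m) = γ / nn - γ := by
                    have hmn : l + m = 1 - nn := by linarith
                    calc γ / nn * (l) + γ / nn * (m) = γ / nn * (l + m) := by ring
                    _ = γ / nn * 1 - γ / nn * nn := by rw [hmn]; ring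
                    _ = γ / nn - γ := by rw [hkey]; ring
                  linarith
                · have hkey : γ / nn * nn = γ := div_mul_cancel₀ γ hnne
                  funext j
                  simp only [cmb, hp]
                  linear_combination (-(c j)) * hkey

lemma mem_hull_triple {a b c y : Fin 3 → ℝ} (hy : y ∈ convexHull ℝ ({a, b, c} : Set (Fin 3 → ℝ))) :
    ∃ s t u : ℝ, 0 ≤ s ∧ 0 ≤ t ∧ 0 ≤ u ∧ s + t + u = 1 ∧ y = cmb a b c s t u := by
  rw [show ({a, b, c} : Set (Fin 3 → ℝ)) = insert a {b, c} from rfl,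
    convexHull_insert ⟨b, by simp⟩] at hy
  obtain ⟨z, hz, hyz⟩ := Set.mem_iUnion₂.mp hy
  rw [Set.mem_singleton_iff] at hz
  subst hz
  obtain ⟨w, hw, hyw⟩ := Set.mem_iUnion₂.mp hyz
  rw [convexHull_pair] at hw
  obtain ⟨r, rr, hr, hrr, hrsum, rfl⟩ := hw
  obtain ⟨p, q, hp, hq, hpq, rfl⟩ := hyw
  refine ⟨p, q * r, q * rr, hp, by positivity, by positivity, by nlinarith, ?_⟩
  funext j
  simp [cmb]
  ring

lemma card_le_three {t : Finset (Fin 3 → ℝ)} (h2 : ∀ v ∈ t, v 2 = 0)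
    (hai : AffineIndependent ℝ ((↑) : t → (Fin 3 → ℝ))) : t.card ≤ 3 := by
  rcases t.eq_empty_or_nonempty with rfl | hne
  · simp
  haveI : Nonempty ↑t := hne.to_subtype
  have hcard : Fintype.card ↑t = (t.card - 1) + 1 := by
    rw [Fintype.card_coe]
    have := hne.card_pos
    omega
  have hfr := hai.finrank_vectorSpan hcard
  set W : Submodule ℝ (Fin 3 → ℝ) := LinearMap.ker (LinearMap.proj (R := ℝ) (φ := fun _ : Fin 3 => ℝ) 2) with hW
  have hWle : vectorSpan ℝ (Set.range ((↑) : t → (Fin 3 → ℝ))) ≤ W := by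
    rw [vectorSpan_def]
    apply Submodule.span_le.mpr
    rintro v ⟨x, ⟨px, rfl⟩, y, ⟨py, rfl⟩, rfl⟩
    have : ((px : Fin 3 → ℝ) - (py : Fin 3 → ℝ)) 2 = 0 := by
      simp only [Pi.sub_apply]
      rw [h2 _ px.2, h2 _ py.2]
      ring
    simpa [hW, LinearMap.mem_ker] using this
  have hWfr : Module.finrank ℝ W = 2 := by
    have hrk := LinearMap.finrank_range_add_finrank_ker
      (LinearMap.proj (R := ℝ) (φ := fun _ : Fin 3 => ℝ) 2)
    have hsurj : LinearMap.range (LinearMap.proj (R := ℝ) (φ := fun _ : Fin 3 => ℝ) 2) = ⊤ := by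
      rw [LinearMap.range_eq_top]
      intro r
      exact ⟨fun _ => r, rfl⟩
    rw [hsurj] at hrk
    simp only [finrank_top] at hrk
    have h3 : Module.finrank ℝ (Fin 3 → ℝ) = 3 := by
      simp [Module.finrank_pi]
    have h1 : Module.finrank ℝ ℝ = 1 := Module.finrank_self ℝ
    rw [hW]
    omega
  have hle := le_trans (Submodule.finrank_mono hWle) (le_of_eq hWfr)
  rw [hfr] at hle
  omega

lemma cara3 {V : Finset (Fin 3 → ℝ)} {y : Fin 3 → ℝ} (h2 : ∀ v ∈ V, v 2 = 0)
    (hy : y ∈ convexHull ℝ (↑V : Set (Fin 3 → ℝ))) :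
    ∃ a ∈ V, ∃ b ∈ V, ∃ c ∈ V, ∃ s t u : ℝ,
      0 ≤ s ∧ 0 ≤ t ∧ 0 ≤ u ∧ s + t + u = 1 ∧ y = cmb a b c s t u := by
  rw [convexHull_eq_union] at hy
  simp only [Set.mem_iUnion] at hy
  obtain ⟨T, hTV, hTai, hyT⟩ := hy
  have hT2 : ∀ v ∈ T, v 2 = 0 := fun v hv => h2 v (hTV hv)
  have hc3 : T.card ≤ 3 := card_le_three hT2 hTai
  have hc1 : 1 ≤ T.card := by
    rcases T.eq_empty_or_nonempty with rfl | hne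
    · simp at hyT
    · exact hne.card_pos
  interval_cases hc : T.card
  · obtain ⟨a, rfl⟩ := Finset.card_eq_one.mp hc
    have ha : a ∈ V := hTV (by simp)
    have : ({a, a, a} : Set (Fin 3 → ℝ)) = ↑({a} : Finset (Fin 3 → ℝ)) := by simp
    obtain ⟨s, t, u, h⟩ := mem_hull_triple (a := a) (b := a) (c := a) (by rw [this]; exact hyT)
    exact ⟨a, ha, a, ha, a, ha, s, t, u, h⟩
  · obtain ⟨a, b, hab, rfl⟩ := Finset.card_eq_two.mp hc
    have ha : a ∈ V := hTV (by simp)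
    have hb : b ∈ V := hTV (by simp)
    have : ({a, b, b} : Set (Fin 3 → ℝ)) = ↑({a, b} : Finset (Fin 3 → ℝ)) := by
      simp [Set.insert_comm]
    obtain ⟨s, t, u, h⟩ := mem_hull_triple (a := a) (b := b) (c := b) (by rw [this]; exact hyT)
    exact ⟨a, ha, b, hb, b, hb, s, t, u, h⟩
  · obtain ⟨a, b, c, hab, hac, hbc, rfl⟩ := Finset.card_eq_three.mp hc
    have ha : a ∈ V := hTV (by simp)
    have hb : b ∈ V := hTV (by simp)
    have hcV : c ∈ V := hTV (by simp)
    have : ({a, b, c} : Set (Fin 3 → ℝ)) = ↑({a, b, c} : Finset (Fin 3 → ℝ)) := by simp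
    obtain ⟨s, t, u, h⟩ := mem_hull_triple (by rw [this]; exact hyT)
    exact ⟨a, ha, b, hb, c, hcV, s, t, u, h⟩

lemma InT_mem {Q : Set (Fin 3 → ℝ)} (hQ : Convex ℝ Q) {a b c w : Fin 3 → ℝ}
    (ha : a ∈ Q) (hb : b ∈ Q) (hc : c ∈ Q) (h : InT a b c w) : w ∈ Q := by
  obtain ⟨s, t, u, hs, ht, hu, hsum, rfl⟩ := h
  have he : cmb a b c s t u = ∑ i : Fin 3, ![s, t, u] i • ![a, b, c] i := by
    funext j
    simp [Fin.sum_univ_three, cmb]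
  rw [he]
  refine hQ.sum_mem ?_ ?_ ?_
  · intro i _; fin_cases i <;> simpa
  · simp [Fin.sum_univ_three]; linarith
  · intro i _; fin_cases i <;> simpa

lemma poly {V : Finset (Fin 3 → ℝ)} (hVlat : ∀ v ∈ V, IsLatticePt v)
    (hV2 : ∀ v ∈ V, v 2 = 0) : IsNormalPolytope (convexHull ℝ (↑V : Set (Fin 3 → ℝ))) := by
  intro n hn x hx hxl
  obtain ⟨y, hy, hxy⟩ := Set.mem_smul_set.mp hx
  obtain ⟨a, ha, b, hb, c, hcV, s, t, u, hs, ht, hu, hstu, hyc⟩ := cara3 hV2 hy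
  have hxc : x = cmb a b c (n * s) (n * t) (n * u) := by
    rw [← hxy, hyc]
    funext j
    simp only [Pi.smul_apply, smul_eq_mul, cmb]
    ring
  obtain ⟨z, hz⟩ := dt_int (hVlat a ha) (hVlat b hb) (hVlat c hcV)
  have hnn : (0 : ℝ) ≤ (n : ℝ) := Nat.cast_nonneg n
  obtain ⟨f, hf, hfs⟩ := tri z.natAbs a b c (hVlat a ha) (hVlat b hb) (hVlat c hcV)
    (hV2 a ha) (hV2 b hb) (hV2 c hcV) ⟨z, hz, rfl⟩ n hn (n * s) (n * t) (n * u)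
    (by positivity) (by positivity) (by positivity)
    (by rw [show (n : ℝ) * s + n * t + n * u = n * (s + t + u) from by ring, hstu, mul_one])
    (by rw [← hxc]; exact hxl)
  refine ⟨f, fun i => ⟨?_, (hf i).2⟩, by rw [hxc, hfs]⟩
  exact InT_mem (convex_convexHull ℝ _) (subset_convexHull ℝ _ ha)
    (subset_convexHull ℝ _ hb) (subset_convexHull ℝ _ hcV) (hf i).1

/-- Slicing criterion for normality. -/
theorem stmt5 (P : Set (Fin 3 → ℝ)) (hP : IsLatticePolytope P) (N : ℕ)
    (hslab : P ⊆ {x | 0 ≤ x 2 ∧ x 2 ≤ (N : ℝ)})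
    (hslice : ∀ i : ℕ, i ≤ N → IsLatticePolytope (P ∩ {x | x 2 = (i : ℝ)}))
    (hpiece : ∀ i : ℕ, i < N →
      IsNormalPolytope (convexHull ℝ ((P ∩ {x | x 2 = (i : ℝ)}) ∪ (P ∩ {x | x 2 = (i : ℝ) + 1}))) ∧
      P ∩ {x | (i : ℝ) ≤ x 2 ∧ x 2 ≤ (i : ℝ) + 1} =
        convexHull ℝ ((P ∩ {x | x 2 = (i : ℝ)}) ∪ (P ∩ {x | x 2 = (i : ℝ) + 1}))) :
    IsNormalPolytope P := by
  obtain ⟨V, hVne, hVlat, hPV⟩ := hP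
  have hPconv : Convex ℝ P := hPV ▸ convex_convexHull ℝ _
  rcases Nat.eq_zero_or_pos N with rfl | hN
  · have hV2 : ∀ v ∈ V, v 2 = 0 := by
      intro v hv
      have hvP : v ∈ P := hPV ▸ subset_convexHull ℝ _ hv
      have h := hslab hvP
      simp only [Set.mem_setOf_eq, Nat.cast_zero] at h
      linarith [h.1, h.2]
    rw [hPV]
    exact poly hVlat hV2
  · intro n hn x hx hxl
    obtain ⟨p, hp, hxp⟩ := Set.mem_smul_set.mp hx
    have hp2 := hslab hp
    simp only [Set.mem_setOf_eq] at hp2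
    set i : ℕ := min ⌊p 2⌋₊ (N - 1) with hi
    have hiN : i < N := by
      have h1 : i ≤ N - 1 := min_le_right _ _
      omega
    have hile : (i : ℝ) ≤ p 2 := by
      have h1 : i ≤ ⌊p 2⌋₊ := min_le_left _ _
      calc (i : ℝ) ≤ (⌊p 2⌋₊ : ℝ) := by exact_mod_cast h1
        _ ≤ p 2 := Nat.floor_le hp2.1
    have hige : p 2 ≤ (i : ℝ) + 1 := by
      by_cases hc : ⌊p 2⌋₊ ≤ N - 1
      · have hieq : i = ⌊p 2⌋₊ := min_eq_left hc
        rw [hieq]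
        exact le_of_lt (Nat.lt_floor_add_one (p 2))
      · have hieq : i = N - 1 := min_eq_right (by omega)
        rw [hieq]
        have hcast : ((N - 1 : ℕ) : ℝ) + 1 = (N : ℝ) := by
          rw [Nat.cast_sub hN]
          ring
        rw [hcast]
        exact hp2.2
    have hiP : p ∈ P ∩ {x | (i : ℝ) ≤ x 2 ∧ x 2 ≤ (i : ℝ) + 1} := ⟨hp, hile, hige⟩
    rw [(hpiece i hiN).2] at hiP
    have hxpiece : x ∈ (n : ℝ) •
        convexHull ℝ ((P ∩ {x | x 2 = (i : ℝ)}) ∪ (P ∩ {x | x 2 = (i : ℝ) + 1})) :=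
      ⟨p, hiP, hxp⟩
    obtain ⟨f, hf, hfs⟩ := (hpiece i hiN).1 n hn x hxpiece hxl
    have hsub : convexHull ℝ ((P ∩ {x | x 2 = (i : ℝ)}) ∪ (P ∩ {x | x 2 = (i : ℝ) + 1})) ⊆ P := by
      apply convexHull_min ?_ hPconv
      intro w hw
      rcases hw with hw | hw
      · exact hw.1
      · exact hw.1
    exact ⟨f, fun j => ⟨hsub (hf j).1, (hf j).2⟩, hfs⟩
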